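/- For odd N and ε ∈ (0,1/2), the majority-vote error of N+2 independent classifiers is strictly less than that of N classifiers: P(N+2,ε) < P(N,ε), i.e., the binomial-tail majority error is monotonically decreasing in the (odd) ensemble size. -/
import Mathlib

noncomputable def majErr (N : ℕ) (ε : ℝ) : ℝ :=
  ∑ k ∈ Finset.Icc ((N + 1) / 2) N, (N.choose k : ℝ) * ε ^ k * (1 - ε) ^ (N - k)

lemma majErr_step (t : ℕ) (ε : ℝ) :
    majErr (2*t+3) ε = majErr (2*t+1) ε
      + ((2*t+1).choose t : ℝ) * (ε*(1-ε))^(t+1) * (2*ε-1) := by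
  set g : ℕ → ℝ := fun k => ((2*t+1).choose k : ℝ) * ε ^ k * (1-ε) ^ (2*t+1-k) with hg
  have hT : majErr (2*t+1) ε = ∑ i ∈ Finset.range (t+1), g (t+1+i) := by
    rw [majErr, show (2*t+1+1)/2 = t+1 by omega, ← Finset.Ico_add_one_right_eq_Icc,
        Finset.sum_Ico_eq_sum_range, show 2*t+1+1-(t+1) = t+1 by omega]
  have hS : majErr (2*t+3) ε = ∑ i ∈ Finset.range (t+2),
      ((2*t+3).choose (t+2+i) : ℝ) * ε ^ (t+2+i) * (1-ε) ^ (2*t+3-(t+2+i)) := by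
    rw [majErr, show (2*t+3+1)/2 = t+2 by omega, ← Finset.Ico_add_one_right_eq_Icc,
        Finset.sum_Ico_eq_sum_range, show 2*t+3+1-(t+2) = t+2 by omega]
  -- per-term identity
  have hterm : ∀ i ∈ Finset.range (t+2),
      ((2*t+3).choose (t+2+i) : ℝ) * ε ^ (t+2+i) * (1-ε) ^ (2*t+3-(t+2+i))
        = (1-ε)^2 * g (t+2+i) + (2*ε*(1-ε)) * g (t+1+i) + ε^2 * g (t+i) := by
    intro i hi
    have hi' : i ≤ t + 1 := by simpa using Nat.lt_succ_iff.mp (Finset.mem_range.mp hi)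
    have e1 : (2*t+3).choose (t+2+i)
        = (2*t+2).choose (t+1+i) + (2*t+2).choose (t+2+i) := by
      rw [show 2*t+3 = (2*t+2)+1 by ring, show t+2+i = (t+1+i)+1 by ring,
          Nat.choose_succ_succ]
    have e2 : (2*t+2).choose (t+1+i)
        = (2*t+1).choose (t+i) + (2*t+1).choose (t+1+i) := by
      rw [show 2*t+2 = (2*t+1)+1 by ring, show t+1+i = (t+i)+1 by ring,
          Nat.choose_succ_succ]
    have e3 : (2*t+2).choose (t+2+i)
        = (2*t+1).choose (t+1+i) + (2*t+1).choose (t+2+i) := by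
      rw [show 2*t+2 = (2*t+1)+1 by ring, show t+2+i = (t+1+i)+1 by ring,
          Nat.choose_succ_succ]
    have hnat : (2*t+3).choose (t+2+i)
        = (2*t+1).choose (t+i) + 2 * (2*t+1).choose (t+1+i)
          + (2*t+1).choose (t+2+i) := by omega
    simp only [hg]
    rw [hnat]
    push_cast
    rcases Nat.lt_or_ge (2*t+1) (t+2+i) with h | h
    · -- i = t or i = t+1, degenerate top terms
      have hz2 : (2*t+1).choose (t+2+i) = 0 := Nat.choose_eq_zero_of_lt (by omega)
      rcases (by omega : i = t ∨ i = t+1) with h' | h'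
      · rw [hz2, show 2*t+3-(t+2+i) = 1 by omega, show 2*t+1-(t+2+i) = 0 by omega,
            show 2*t+1-(t+1+i) = 0 by omega, show 2*t+1-(t+i) = 1 by omega,
            show t+2+i = (t+i)+2 by omega, show t+1+i = (t+i)+1 by omega]
        push_cast
        ring
      · have hz1 : (2*t+1).choose (t+1+i) = 0 := Nat.choose_eq_zero_of_lt (by omega)
        rw [hz2, hz1, show 2*t+3-(t+2+i) = 0 by omega,
            show 2*t+1-(t+2+i) = 0 by omega, show 2*t+1-(t+1+i) = 0 by omega,
            show 2*t+1-(t+i) = 0 by omega,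
            show t+2+i = (t+i)+2 by omega, show t+1+i = (t+i)+1 by omega]
        push_cast
        ring
    · -- generic case
      rw [show 2*t+3-(t+2+i) = (2*t+1-(t+2+i))+2 by omega,
          show 2*t+1-(t+1+i) = (2*t+1-(t+2+i))+1 by omega,
          show 2*t+1-(t+i) = (2*t+1-(t+2+i))+2 by omega,
          show t+2+i = t+i+2 by ring, show t+1+i = t+i+1 by ring]
      ring
  rw [hS, Finset.sum_congr rfl hterm, hT]
  rw [Finset.sum_add_distrib, Finset.sum_add_distrib, ← Finset.mul_sum, ← Finset.mul_sum,
      ← Finset.mul_sum]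
  have gz1 : g (2*t+2) = 0 := by
    simp [hg, Nat.choose_eq_zero_of_lt (show 2*t+1 < 2*t+2 by omega)]
  have gz2 : g (2*t+3) = 0 := by
    simp [hg, Nat.choose_eq_zero_of_lt (show 2*t+1 < 2*t+3 by omega)]
  have hA : ∑ i ∈ Finset.range (t+2), g (t+2+i)
      = (∑ i ∈ Finset.range (t+1), g (t+1+i)) - g (t+1) := by
    rw [Finset.sum_range_succ, show t+2+(t+1) = 2*t+3 by ring, gz2,
        Finset.sum_range_succ, show t+2+t = 2*t+2 by ring, gz1,
        Finset.sum_range_succ' (fun i => g (t+1+i)) t]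
    have : ∀ i ∈ Finset.range t, g (t+1+(i+1)) = g (t+2+i) := by
      intro i _
      congr 1
      omega
    rw [Finset.sum_congr rfl this]
    simp
  have hB : ∑ i ∈ Finset.range (t+2), g (t+1+i)
      = ∑ i ∈ Finset.range (t+1), g (t+1+i) := by
    rw [Finset.sum_range_succ, show t+1+(t+1) = 2*t+2 by ring, gz1, add_zero]
  have hC : ∑ i ∈ Finset.range (t+2), g (t+i)
      = g t + ∑ i ∈ Finset.range (t+1), g (t+1+i) := by
    rw [Finset.sum_range_succ' (fun i => g (t+i)) (t+1), add_zero]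
    have : ∀ i ∈ Finset.range (t+1), g (t+(i+1)) = g (t+1+i) := by
      intro i _
      congr 1
      omega
    rw [Finset.sum_congr rfl this]
    ring
  rw [hA, hB, hC]
  have hgt1 : g (t+1) = ((2*t+1).choose t : ℝ) * ε^(t+1) * (1-ε)^t := by
    have hsym := Nat.choose_symm (show t+1 ≤ 2*t+1 by omega)
    rw [show 2*t+1-(t+1) = t by omega] at hsym
    simp only [hg]
    rw [show 2*t+1-(t+1) = t by omega, hsym]
  have hgt : g t = ((2*t+1).choose t : ℝ) * ε^t * (1-ε)^(t+1) := by
    simp only [hg]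
    rw [show 2*t+1-t = t+1 by omega]
  rw [hgt1, hgt, mul_pow]
  ring

theorem majErr_strict_anti (N : ℕ) (hN : Odd N)
    (ε : ℝ) (hε0 : 0 < ε) (hε : ε < 1 / 2) :
    majErr (N + 2) ε < majErr N ε := by
  obtain ⟨t, rfl⟩ := hN
  rw [show 2*t+1+2 = 2*t+3 by ring, majErr_step]
  have h1 : (0:ℝ) < ((2*t+1).choose t : ℝ) := by
    exact_mod_cast Nat.choose_pos (by omega : t ≤ 2*t+1)
  have h2 : (0:ℝ) < (ε*(1-ε))^(t+1) := pow_pos (by nlinarith) _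
  have h3 : 2*ε-1 < 0 := by linarith
  have := mul_neg_of_pos_of_neg (mul_pos h1 h2) h3
  linarith
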